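/- The number of unit interval posets with n elements (counted up to isomorphism) equals the n-th Catalan number Cat_n = (1/(2n+1)) * C(2n+1, n). -/

import Mathlib

/-- `r` is (the strict order of) a unit interval order on `Fin n`:
`r i j ↔ x i + 1 < x j` for some reals `x 1 < ⋯ < x n`. -/
def IsUnitIntervalRel (n : ℕ) (r : Fin n → Fin n → Prop) : Prop :=
  ∃ x : Fin n → ℝ, StrictMono x ∧ ∀ i j, r i j ↔ x i + 1 < x j

/-- Isomorphism of relations on `Fin n` (relabeling by a permutation). -/
def IsoRel (n : ℕ) (r r' : {r : Fin n → Fin n → Prop // IsUnitIntervalRel n r}) : Prop :=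
  ∃ σ : Equiv.Perm (Fin n), ∀ i j, r.1 i j ↔ r'.1 (σ i) (σ j)


lemma catalan_arith (n : ℕ) : (2 * n + 1) * catalan n = (2 * n + 1).choose n := by
  have h1 : (n + 1) * catalan n = n.centralBinom := succ_mul_catalan_eq_centralBinom n
  have h2 : (2 * n).succ * (2 * n).choose n = (2 * n).succ.choose (n.succ) * n.succ :=
    Nat.add_one_mul_choose_eq (2 * n) n
  have h3 : (2 * n + 1).choose (n + 1) = (2 * n + 1).choose n := by
    rw [← Nat.choose_symm (show n + 1 ≤ 2 * n + 1 by omega)]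
    congr 1
    omega
  have key : (n + 1) * ((2 * n + 1) * catalan n) = (n + 1) * ((2 * n + 1).choose n) := by
    rw [show (n+1) * ((2*n+1) * catalan n) = (2*n+1) * ((n+1) * catalan n) by ring, h1,
      Nat.centralBinom]
    have e : (2 * n).succ = 2 * n + 1 := rfl
    rw [e] at h2
    rw [h2, show n.succ = n + 1 from rfl, h3]
    ring
  exact Nat.eq_of_mul_eq_mul_left (by omega) key

lemma card_ge (n a : ℕ) (ha : a ≤ n) : Nat.card {j : Fin n // a ≤ (j : ℕ)} = n - a := by
  have e : {j : Fin n // a ≤ (j : ℕ)} ≃ Fin (n - a) :=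
    { toFun := fun j => ⟨(j.1 : ℕ) - a, by have := j.1.2; have := j.2; omega⟩
      invFun := fun k => ⟨⟨k.1 + a, by have := k.2; omega⟩, by simp⟩
      left_inv := fun j => by
        ext
        have := j.2
        simp
        omega
      right_inv := fun k => by ext; simp }
  rw [Nat.card_congr e, Nat.card_eq_fintype_card, Fintype.card_fin]

lemma card_lt (n b : ℕ) (hb : b ≤ n) : Nat.card {j : Fin n // (j : ℕ) < b} = b := by
  have e : {j : Fin n // (j : ℕ) < b} ≃ Fin b :=
    { toFun := fun j => ⟨(j.1 : ℕ), j.2⟩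
      invFun := fun k => ⟨⟨k.1, by have := k.2; omega⟩, by simpa using k.2⟩
      left_inv := fun j => by ext; simp
      right_inv := fun k => by ext; simp }
  rw [Nat.card_congr e, Nat.card_eq_fintype_card, Fintype.card_fin]

lemma ncard_ge (n a : ℕ) (ha : a ≤ n) : {j : Fin n | a ≤ (j : ℕ)}.ncard = n - a := by
  rw [← Nat.card_coe_set_eq]; exact card_ge n a ha

lemma ncard_lt (n b : ℕ) (hb : b ≤ n) : {j : Fin n | (j : ℕ) < b}.ncard = b := by
  rw [← Nat.card_coe_set_eq]; exact card_lt n b hb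

lemma ncard_le_n {n : ℕ} (S : Set (Fin n)) : S.ncard ≤ n := by
  have := Set.ncard_le_ncard (Set.subset_univ S) Set.finite_univ
  simpa [Set.ncard_univ] using this

/-- membership in an up-closed set of `Fin n` is characterized by a threshold. -/
lemma upset_mem_iff {n : ℕ} (S : Set (Fin n)) (hup : ∀ ⦃j j' : Fin n⦄, j ∈ S → j ≤ j' → j' ∈ S)
    (j : Fin n) : j ∈ S ↔ n - S.ncard ≤ (j : ℕ) := by
  have hSn := ncard_le_n S
  constructor
  · intro hj
    have hsub : {j' : Fin n | (j : ℕ) ≤ (j' : ℕ)} ⊆ S := by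
      intro j' hj'
      exact hup hj (by exact_mod_cast hj')
    have := Set.ncard_le_ncard hsub (Set.toFinite S)
    rw [ncard_ge n j (le_of_lt j.2)] at this
    have := j.2
    omega
  · intro hj
    by_contra hjS
    have hsub : S ⊆ {j' : Fin n | (j : ℕ) + 1 ≤ (j' : ℕ)} := by
      intro s hs
      simp only [Set.mem_setOf_eq]
      by_contra hle
      exact hjS (hup hs (by omega))
    have := Set.ncard_le_ncard hsub (Set.toFinite _)
    rw [ncard_ge n ((j : ℕ) + 1) j.2] at this
    have := j.2
    omega

lemma downset_mem_iff {n : ℕ} (D : Set (Fin n)) (hdn : ∀ ⦃j j' : Fin n⦄, j ∈ D → j' ≤ j → j' ∈ D)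
    (j : Fin n) : j ∈ D ↔ (j : ℕ) < D.ncard := by
  constructor
  · intro hj
    have hsub : {j' : Fin n | (j' : ℕ) < (j : ℕ) + 1} ⊆ D := by
      intro j' hj'
      exact hdn hj (by simp only [Set.mem_setOf_eq] at hj'; exact_mod_cast (by omega : (j' : ℕ) ≤ (j : ℕ)))
    have := Set.ncard_le_ncard hsub (Set.toFinite D)
    rw [ncard_lt n ((j : ℕ) + 1) j.2] at this
    omega
  · intro hj
    by_contra hjD
    have hsub : D ⊆ {j' : Fin n | (j' : ℕ) < (j : ℕ)} := by
      intro s hs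
      simp only [Set.mem_setOf_eq]
      by_contra hle
      exact hjD (hdn hs (by exact_mod_cast (by omega : (j : ℕ) ≤ (s : ℕ))))
    have := Set.ncard_le_ncard hsub (Set.toFinite _)
    rw [ncard_lt n (j : ℕ) (le_of_lt j.2)] at this
    omega


lemma exists_realization : ∀ (n : ℕ) (f : Fin n → ℕ), Monotone f → (∀ i : Fin n, (i : ℕ) < f i) →
    (∀ i, f i ≤ n) → ∃ x : Fin n → ℝ, StrictMono x ∧
      ∀ i j : Fin n, (f i ≤ (j : ℕ) → x i + 1 < x j) ∧ ((j : ℕ) < f i → x j < x i + 1) := by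
  intro n
  induction n with
  | zero =>
    intro f _ _ _
    exact ⟨Fin.elim0, fun a => a.elim0, fun a => a.elim0⟩
  | succ n ih =>
    intro f hmono hlt hle
    -- the last value of f is n + 1
    have hflast : f (Fin.last n) = n + 1 := by
      have h1 := hlt (Fin.last n)
      have h2 := hle (Fin.last n)
      simp only [Fin.val_last] at h1
      omega
    rcases Nat.eq_zero_or_pos n with hn0 | hnpos
    · -- n = 0 : Fin 1
      subst hn0
      refine ⟨fun _ => (0 : ℝ), ?_, ?_⟩
      · intro a b h
        have h1 : (a : ℕ) < (b : ℕ) := h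
        have := a.2; have := b.2
        omega
      · intro i j
        refine ⟨fun h => ?_, fun _ => by norm_num⟩
        exfalso
        have := hlt i
        have := j.2
        have := i.2
        omega
    · -- general case, n ≥ 1
      set f' : Fin n → ℕ := fun i => min (f i.castSucc) n with hf'def
      have hf'mono : Monotone f' := fun a b hab => by
        simp only [hf'def]
        exact min_le_min (hmono (by simpa using hab)) le_rfl
      have hf'lt : ∀ i : Fin n, (i : ℕ) < f' i := by
        intro i
        have := hlt i.castSucc
        have := i.2
        simp only [hf'def, Fin.coe_castSucc] at *
        omega
      have hf'le : ∀ i, f' i ≤ n := fun i => min_le_right _ _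
      obtain ⟨x', hx', hprop⟩ := ih f' hf'mono hf'lt hf'le
      classical
      set T : Finset (Fin n) := Finset.univ.filter (fun i => f i.castSucc ≤ n) with hTdef
      have huniv : (Finset.univ : Finset (Fin n)).Nonempty := by
        refine ⟨⟨0, hnpos⟩, Finset.mem_univ _⟩
      set lb : Finset ℝ := (Finset.univ.image x') ∪ (T.image (fun i => x' i + 1)) with hlbdef
      have hlbne : lb.Nonempty := by
        refine Finset.Nonempty.mono Finset.subset_union_left (huniv.image x')
      set L : ℝ := lb.max' hlbne with hLdef
      set ub : Finset ℝ := (Finset.univ \ T).image (fun i => x' i + 1) with hubdef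
      -- every lower bound is < every upper bound
      have hkey : ∀ a ∈ lb, ∀ b ∈ ub, a < b := by
        intro a ha b hb
        simp only [hubdef, Finset.mem_image, Finset.mem_sdiff, Finset.mem_univ, true_and,
          hTdef, Finset.mem_filter, not_and, not_le] at hb
        obtain ⟨i1, hi1, rfl⟩ := hb
        have hi1' : n < f i1.castSucc := hi1
        simp only [hlbdef, Finset.mem_union, Finset.mem_image, Finset.mem_univ, true_and,
          hTdef, Finset.mem_filter] at ha
        rcases ha with ⟨i0, rfl⟩ | ⟨i0, hi0T, rfl⟩
        · -- x' i0 < x' i1 + 1 since f' i1 = n > i0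
          have : (i0 : ℕ) < f' i1 := by
            simp only [hf'def]
            have := i0.2
            omega
          exact (hprop i1 i0).2 this
        · -- i0 ∈ T, i1 ∉ T : i0 < i1
          have hmle : f i0.castSucc ≤ n := hi0T
          have hi01 : i0 < i1 := by
            by_contra hcon
            push_neg at hcon
            have := hmono (show i1.castSucc ≤ i0.castSucc by simpa using hcon)
            omega
          have := hx' hi01
          linarith
      set v : ℝ := if h : ub.Nonempty then (L + ub.min' h) / 2 else L + 1 with hvdef
      have hLv : L < v := by
        rw [hvdef]
        split_ifs with h
        · have := hkey L (lb.max'_mem hlbne) (ub.min' h) (ub.min'_mem h)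
          linarith
        · linarith
      have hvU : ∀ b ∈ ub, v < b := by
        intro b hb
        have hne : ub.Nonempty := ⟨b, hb⟩
        rw [hvdef]
        simp only [dif_pos hne]
        have h1 := hkey L (lb.max'_mem hlbne) (ub.min' hne) (ub.min'_mem hne)
        have h2 := ub.min'_le b hb
        linarith
      have hxle : ∀ i : Fin n, x' i ≤ L := by
        intro i
        apply lb.le_max'
        simp only [hlbdef, Finset.mem_union, Finset.mem_image, Finset.mem_univ, true_and]
        exact Or.inl ⟨i, rfl⟩
      have hxTle : ∀ i : Fin n, f i.castSucc ≤ n → x' i + 1 ≤ L := by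
        intro i hi
        apply lb.le_max'
        simp only [hlbdef, Finset.mem_union, Finset.mem_image, hTdef, Finset.mem_filter,
          Finset.mem_univ, true_and]
        exact Or.inr ⟨i, hi, rfl⟩
      have hvub : ∀ i : Fin n, n < f i.castSucc → v < x' i + 1 := by
        intro i hi
        apply hvU
        simp only [hubdef, Finset.mem_image, Finset.mem_sdiff, Finset.mem_univ, true_and,
          hTdef, Finset.mem_filter, not_and, not_le]
        exact ⟨i, hi, rfl⟩
      refine ⟨Fin.snoc x' v, ?_, ?_⟩
      · -- strict mono
        intro a b hab
        rcases Fin.eq_castSucc_or_eq_last b with ⟨b', rfl⟩ | rfl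
        · rcases Fin.eq_castSucc_or_eq_last a with ⟨a', rfl⟩ | rfl
          · simp only [Fin.snoc_castSucc]
            exact hx' (by simpa using hab)
          · exfalso
            have := Fin.castSucc_lt_last b'
            have h1 : (Fin.last n : Fin (n+1)) < Fin.last n := lt_trans hab this
            exact lt_irrefl _ h1
        · rcases Fin.eq_castSucc_or_eq_last a with ⟨a', rfl⟩ | rfl
          · simp only [Fin.snoc_castSucc, Fin.snoc_last]
            exact lt_of_le_of_lt (hxle a') hLv
          · exact absurd hab (lt_irrefl _)
      · -- main property
        intro i j
        rcases Fin.eq_castSucc_or_eq_last i with ⟨i', rfl⟩ | rfl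
        · rcases Fin.eq_castSucc_or_eq_last j with ⟨j', rfl⟩ | rfl
          · -- both old
            simp only [Fin.snoc_castSucc, Fin.coe_castSucc]
            constructor
            · intro h
              apply (hprop i' j').1
              simp only [hf'def]
              have := j'.2
              omega
            · intro h
              apply (hprop i' j').2
              simp only [hf'def]
              have := j'.2
              omega
          · -- i old, j last
            simp only [Fin.snoc_castSucc, Fin.snoc_last, Fin.val_last]
            constructor
            · intro h
              exact lt_of_le_of_lt (hxTle i' h) hLv
            · intro h
              exact hvub i' h
        · -- i = last
          constructor
          · intro h
            exfalso
            rw [hflast] at h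
            have := j.2
            omega
          · intro _
            simp only [Fin.snoc_last]
            rcases Fin.eq_castSucc_or_eq_last j with ⟨j', rfl⟩ | rfl
            · simp only [Fin.snoc_castSucc]
              have := hxle j'
              linarith
            · simp only [Fin.snoc_last]
              linarith

def UIP (n : ℕ) : Type :=
  {f : Fin n → ℕ // Monotone f ∧ (∀ i : Fin n, (i : ℕ) < f i) ∧ (∀ i, f i ≤ n)}

instance (n : ℕ) : Finite (UIP n) := by
  apply Finite.of_injective
    (fun f : UIP n => (fun i => (⟨f.1 i, Nat.lt_succ_of_le (f.2.2.2 i)⟩ : Fin (n + 1)) : Fin n → Fin (n + 1)))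
  intro f g h
  apply Subtype.ext
  funext i
  exact congrArg Fin.val (congrFun h i)

section
variable {n : ℕ}

lemma uip_touch (f : UIP (n+1)) : ∃ i, ∃ h : i < n + 1, f.1 ⟨i, h⟩ = i + 1 := by
  have h1 := f.2.2.1 (⟨n, by fin_omega⟩ : Fin (n+1))
  have h2 := f.2.2.2 (⟨n, by fin_omega⟩ : Fin (n+1))
  exact ⟨n, by fin_omega, by fin_omega⟩

open Classical in
/-- the first index where `f i = i + 1`. -/
noncomputable def firstTouch (f : UIP (n+1)) : ℕ :=
  Nat.find (uip_touch f)

lemma firstTouch_le (f : UIP (n+1)) : firstTouch f ≤ n := by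
  classical
  apply Nat.find_min'
  have h1 := f.2.2.1 (⟨n, by fin_omega⟩ : Fin (n+1))
  have h2 := f.2.2.2 (⟨n, by fin_omega⟩ : Fin (n+1))
  exact ⟨by fin_omega, by fin_omega⟩

lemma firstTouch_spec (f : UIP (n+1)) (h : firstTouch f < n + 1) :
    f.1 ⟨firstTouch f, h⟩ = firstTouch f + 1 := by
  classical
  obtain ⟨h', hs⟩ := Nat.find_spec (uip_touch f)
  exact hs

lemma firstTouch_min (f : UIP (n+1)) (i : ℕ) (hi : i < firstTouch f) (h : i < n + 1) :
    f.1 ⟨i, h⟩ ≠ i + 1 := by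
  classical
  intro hc
  exact Nat.find_min (uip_touch f) hi ⟨h, hc⟩

noncomputable def uipF (f : UIP (n+1)) : Σ k : Fin (n+1), UIP k × UIP (n - k) := by
  classical
  have hkn := firstTouch_le f
  refine ⟨⟨firstTouch f, by fin_omega⟩,
    ⟨fun j => f.1 ⟨j.1, by have := j.2; fin_omega⟩ - 1, ?_, ?_, ?_⟩,
    ⟨fun j => f.1 ⟨firstTouch f + 1 + j.1, by have := j.2; fin_omega⟩ - (firstTouch f + 1), ?_, ?_, ?_⟩⟩
  · intro a b hab
    have hab' : (a : ℕ) ≤ (b : ℕ) := hab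
    have hm := f.2.1 (show (⟨a.1, by have := a.2; fin_omega⟩ : Fin (n+1)) ≤ ⟨b.1, by have := b.2; fin_omega⟩
      from by simp only [Fin.mk_le_mk]; fin_omega)
    beta_reduce
    fin_omega
  · intro j
    have h1 := f.2.2.1 (⟨j.1, by have := j.2; fin_omega⟩ : Fin (n+1))
    have h2 := firstTouch_min f j.1 j.2 (by have := j.2; fin_omega)
    beta_reduce
    simp only [Fin.val_mk] at h1 h2 ⊢
    fin_omega
  · intro j
    have hjk : (j : ℕ) < firstTouch f := j.2
    have hk : firstTouch f < n + 1 := by fin_omega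
    have hmono := f.2.1 (show (⟨j.1, by fin_omega⟩ : Fin (n+1)) ≤ ⟨firstTouch f, hk⟩
      from by simp only [Fin.mk_le_mk]; fin_omega)
    have hs := firstTouch_spec f hk
    beta_reduce
    fin_omega
  · intro a b hab
    have hab' : (a : ℕ) ≤ (b : ℕ) := hab
    have hm := f.2.1 (show (⟨firstTouch f + 1 + a.1, by have := a.2; fin_omega⟩ : Fin (n+1)) ≤
      ⟨firstTouch f + 1 + b.1, by have := b.2; fin_omega⟩ from by simp only [Fin.mk_le_mk]; fin_omega)
    beta_reduce
    fin_omega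
  · intro j
    have h1 := f.2.2.1 (⟨firstTouch f + 1 + j.1, by have := j.2; fin_omega⟩ : Fin (n+1))
    beta_reduce
    simp only [Fin.val_mk] at h1 ⊢
    fin_omega
  · intro j
    have h2 := f.2.2.2 (⟨firstTouch f + 1 + j.1, by have := j.2; fin_omega⟩ : Fin (n+1))
    beta_reduce
    fin_omega

def uipG (s : Σ k : Fin (n+1), UIP k × UIP (n - k)) : UIP (n+1) := by
  refine ⟨fun i => if h : (i : ℕ) < (s.1 : ℕ) then s.2.1.1 ⟨i, h⟩ + 1
    else if h2 : (i : ℕ) = (s.1 : ℕ) then (s.1 : ℕ) + 1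
    else s.2.2.1 ⟨(i : ℕ) - ((s.1 : ℕ) + 1), by have := i.2; have := s.1.2; fin_omega⟩ + ((s.1 : ℕ) + 1),
    ?_, ?_, ?_⟩
  · -- monotone
    intro a b hab
    have hab' : (a : ℕ) ≤ (b : ℕ) := hab
    beta_reduce
    split_ifs with h1 h2 h3 h4 h5 h6 h7 <;> try fin_omega
    · -- a < k, b < k
      have := s.2.1.2.1 (show (⟨(a:ℕ), h1⟩ : Fin s.1) ≤ ⟨(b:ℕ), h2⟩ from by
        simp only [Fin.mk_le_mk]; fin_omega)
      fin_omega
    · -- a < k, b = k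
      have := s.2.1.2.2.2 (⟨(a:ℕ), h1⟩ : Fin s.1)
      fin_omega
    · -- a < k, b in right part
      have hle := s.2.1.2.2.2 (⟨(a:ℕ), h1⟩ : Fin s.1)
      have hlt := s.2.2.2.2.1 (⟨(b:ℕ) - ((s.1:ℕ)+1), by have := b.2; fin_omega⟩ : Fin (n - s.1))
      fin_omega
    · -- both in right part
      have := s.2.2.2.1 (show (⟨(a:ℕ) - ((s.1:ℕ)+1), by have := a.2; fin_omega⟩ : Fin (n - s.1)) ≤
        ⟨(b:ℕ) - ((s.1:ℕ)+1), by have := b.2; fin_omega⟩ from by simp only [Fin.mk_le_mk]; fin_omega)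
      fin_omega
  · -- i < f i
    intro i
    beta_reduce
    split_ifs with h1 h2 <;> try fin_omega
    · have := s.2.1.2.2.1 (⟨(i:ℕ), h1⟩ : Fin s.1)
      simp only [Fin.val_mk] at this
      fin_omega
    · have := s.2.2.2.2.1 (⟨(i:ℕ) - ((s.1:ℕ)+1), by have := i.2; have := s.1.2; fin_omega⟩ : Fin (n - s.1))
      simp only [Fin.val_mk] at this
      fin_omega
  · -- f i ≤ n + 1
    intro i
    beta_reduce
    split_ifs with h1 h2
    · have := s.2.1.2.2.2 (⟨(i:ℕ), h1⟩ : Fin s.1)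
      have := s.1.2
      fin_omega
    · have := s.1.2
      fin_omega
    · have := s.2.2.2.2.2 (⟨(i:ℕ) - ((s.1:ℕ)+1), by have := i.2; have := s.1.2; fin_omega⟩ : Fin (n - s.1))
      have := s.1.2
      fin_omega

end

section
variable {n : ℕ}

lemma uipGF (f : UIP (n+1)) : uipG (uipF f) = f := by
  have hkn := firstTouch_le f
  apply Subtype.ext
  funext i
  show (uipG (uipF f)).1 i = f.1 i
  unfold uipG uipF
  dsimp only
  split_ifs with h1 h2
  · -- i < firstTouch f
    have h2' := firstTouch_min f i.1 h1 i.2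
    have hlt := f.2.2.1 i
    have heq : (⟨(i:ℕ), i.2⟩ : Fin (n+1)) = i := Fin.ext rfl
    beta_reduce
    rw [show (⟨(i:ℕ), by have := i.2; omega⟩ : Fin (n+1)) = i from Fin.ext rfl]
    omega
  · have hs := firstTouch_spec f (by omega)
    rw [show (⟨firstTouch f, by omega⟩ : Fin (n+1)) = i from Fin.ext h2.symm] at hs
    omega
  · beta_reduce
    have hlt := f.2.2.1 i
    rw [show (⟨firstTouch f + 1 + ((i:ℕ) - (firstTouch f + 1)), by have := i.2; omega⟩ : Fin (n+1)) = i
      from Fin.ext (by simp only [Fin.val_mk]; omega)]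
    omega

lemma uipG_injective : Function.Injective (uipG (n := n)) := by
  rintro ⟨k, g1, g2⟩ ⟨k', g1', g2'⟩ h
  have hval : ∀ i : Fin (n+1), (uipG ⟨k, g1, g2⟩).1 i = (uipG ⟨k', g1', g2'⟩).1 i :=
    fun i => congrFun (congrArg Subtype.val h) i
  have keyk : ∀ (a b : Fin (n+1)) (G1 : UIP a) (G2 : UIP (n - a)) (G1' : UIP b) (G2' : UIP (n - b)),
      (a : ℕ) < (b : ℕ) →
      ¬ ∀ i : Fin (n+1), (uipG ⟨a, G1, G2⟩).1 i = (uipG ⟨b, G1', G2'⟩).1 i := by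
    intro a b G1 G2 G1' G2' hab hcon
    have hthis := hcon ⟨(a : ℕ), a.2⟩
    simp only [uipG] at hthis
    split_ifs at hthis with h1 h2 h3 h4 h5 h6 <;>
      first
      | fin_omega
      | · have hl := G1'.2.2.1 (⟨(a : ℕ), by fin_omega⟩ : Fin b)
          fin_omega
  have hk : k = k' := by
    rcases lt_trichotomy (k : ℕ) (k' : ℕ) with hlt | heq | hgt
    · exact absurd hval (keyk k k' g1 g2 g1' g2' hlt)
    · exact Fin.ext heq
    · exact absurd (fun i => (hval i).symm) (keyk k' k g1' g2' g1 g2 hgt)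
  subst hk
  have hg1 : g1 = g1' := by
    apply Subtype.ext
    funext j
    have hj := j.2
    have hthis := hval ⟨(j : ℕ), by fin_omega⟩
    simp only [uipG] at hthis
    split_ifs at hthis with h1 <;> try fin_omega
    simp only [Fin.eta] at hthis
    omega
  have hg2 : g2 = g2' := by
    apply Subtype.ext
    funext j
    have hj := j.2
    have hkb := k.2
    have hthis := hval ⟨(k : ℕ) + 1 + (j : ℕ), by fin_omega⟩
    simp only [uipG] at hthis
    split_ifs at hthis with h1 h2 <;> try fin_omega
    rw [show (⟨((⟨(k:ℕ) + 1 + (j:ℕ), by fin_omega⟩ : Fin (n+1)) : ℕ) - ((k:ℕ) + 1), by fin_omega⟩ : Fin (n - k)) = j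
      from Fin.ext (by simp only [Fin.val_mk]; omega)] at hthis
    omega
  rw [hg1, hg2]

lemma card_UIP_succ : Nat.card (UIP (n+1)) = ∑ k : Fin (n+1), Nat.card (UIP (k : ℕ)) * Nat.card (UIP (n - (k : ℕ))) := by
  classical
  have hbij : Function.Bijective (uipG (n := n)) := ⟨uipG_injective, fun f => ⟨uipF f, uipGF f⟩⟩
  rw [← Nat.card_congr (Equiv.ofBijective _ hbij)]
  haveI : ∀ m : ℕ, Fintype (UIP m) := fun m => Fintype.ofFinite _
  rw [Nat.card_eq_fintype_card, Fintype.card_sigma]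
  congr 1
  funext k
  rw [Fintype.card_prod, Nat.card_eq_fintype_card, Nat.card_eq_fintype_card]

lemma card_UIP_eq_catalan (n : ℕ) : Nat.card (UIP n) = catalan n := by
  induction n using Nat.strong_induction_on with
  | _ n ih =>
    match n, ih with
    | 0, _ =>
      have hu : Nat.card (UIP 0) = 1 := by
        rw [Nat.card_eq_one_iff_unique]
        constructor
        · constructor
          intro f g
          apply Subtype.ext
          funext i
          exact i.elim0
        · exact ⟨⟨fun i => i.elim0, fun a b _ => by exact a.elim0, fun i => i.elim0, fun i => i.elim0⟩⟩
      rw [hu, catalan_zero]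
    | m + 1, ih =>
      rw [card_UIP_succ, catalan_succ]
      apply Finset.sum_congr rfl
      intro k _
      rw [ih k (by have := k.2; omega), ih (m - (k : ℕ)) (by have := k.2; omega)]

end
noncomputable def psiFun (n : ℕ) (r : Fin n → Fin n → Prop) : Fin n → ℕ :=
  fun i => n - {j | r i j}.ncard

lemma thr_unique {n a b : ℕ} (ha : a ≤ n) (hb : b ≤ n)
    (h : ∀ j : Fin n, a ≤ (j : ℕ) ↔ b ≤ (j : ℕ)) : a = b := by
  by_contra hne
  rcases Nat.lt_or_ge a b with hl | hg
  · have := (h ⟨a, by omega⟩).1 (by simp)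
    simp at this; omega
  · have hlt : b < a := by omega
    have := (h ⟨b, by omega⟩).2 (by simp)
    simp at this; omega

section
variable {n : ℕ}


lemma psi_char (r : Fin n → Fin n → Prop) (hr : IsUnitIntervalRel n r) (i j : Fin n) :
    r i j ↔ psiFun n r i ≤ (j : ℕ) := by
  obtain ⟨x, hx, hrx⟩ := hr
  have hup : ∀ ⦃j j' : Fin n⦄, j ∈ {j | r i j} → j ≤ j' → j' ∈ {j | r i j} := by
    intro a b ha hab
    simp only [Set.mem_setOf_eq, hrx] at ha ⊢
    exact lt_of_lt_of_le ha (hx.monotone hab)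
  exact upset_mem_iff _ hup j

lemma psi_mem (r : Fin n → Fin n → Prop) (hr : IsUnitIntervalRel n r) :
    Monotone (psiFun n r) ∧ (∀ i : Fin n, (i : ℕ) < psiFun n r i) ∧ (∀ i, psiFun n r i ≤ n) := by
  obtain ⟨x, hx, hrx⟩ := hr
  refine ⟨?_, ?_, fun i => Nat.sub_le _ _⟩
  · intro i i' hii'
    have hsub : {j | r i' j} ⊆ {j | r i j} := by
      intro j hj
      simp only [Set.mem_setOf_eq, hrx] at hj ⊢
      exact lt_of_le_of_lt (by linarith [hx.monotone hii']) hj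
    exact Nat.sub_le_sub_left (Set.ncard_le_ncard hsub (Set.toFinite _)) n
  · intro i
    have hsub : {j | r i j} ⊆ {j : Fin n | (i : ℕ) + 1 ≤ (j : ℕ)} := by
      intro j hj
      simp only [Set.mem_setOf_eq, hrx] at hj
      have hxij : x i < x j := by linarith
      have hij : i < j := hx.lt_iff_lt.1 hxij
      have : (i : ℕ) < (j : ℕ) := hij
      simp only [Set.mem_setOf_eq]
      omega
    have hc := Set.ncard_le_ncard hsub (Set.toFinite _)
    rw [ncard_ge n ((i : ℕ) + 1) i.2] at hc
    have hi := i.2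
    unfold psiFun
    omega

noncomputable def psi (r : {r : Fin n → Fin n → Prop // IsUnitIntervalRel n r}) : UIP n :=
  ⟨psiFun n r.1, psi_mem r.1 r.2⟩

lemma monotone_eq_of_perm (f f' : Fin n → ℕ) (hf : Monotone f) (hf' : Monotone f')
    (σ : Equiv.Perm (Fin n)) (h : ∀ i, f' (σ i) = f i) : f = f' := by
  have hcard : ∀ t : ℕ, {i | f i ≤ t}.ncard = {i | f' i ≤ t}.ncard := by
    intro t
    rw [← Nat.card_coe_set_eq, ← Nat.card_coe_set_eq]
    exact Nat.card_congr (Equiv.subtypeEquiv σ (fun i => by simp [h i]))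
  have key : ∀ (t : ℕ) (j : Fin n), f j ≤ t ↔ f' j ≤ t := by
    intro t j
    have d1 : ∀ ⦃a b : Fin n⦄, a ∈ {i | f i ≤ t} → b ≤ a → b ∈ {i | f i ≤ t} := by
      intro a b ha hba
      exact le_trans (hf hba) ha
    have d2 : ∀ ⦃a b : Fin n⦄, a ∈ {i | f' i ≤ t} → b ≤ a → b ∈ {i | f' i ≤ t} := by
      intro a b ha hba
      exact le_trans (hf' hba) ha
    rw [show (f j ≤ t) = (j ∈ {i | f i ≤ t}) from rfl, downset_mem_iff _ d1,
      show (f' j ≤ t) = (j ∈ {i | f' i ≤ t}) from rfl, downset_mem_iff _ d2, hcard]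
  funext j
  exact le_antisymm ((key (f' j) j).2 le_rfl) ((key (f j) j).1 le_rfl)

end

section
variable {n : ℕ}

lemma psi_compat (r r' : {r : Fin n → Fin n → Prop // IsUnitIntervalRel n r})
    (h : IsoRel n r r') : psi r = psi r' := by
  obtain ⟨σ, hσ⟩ := h
  have hpoint : ∀ i, psiFun n r'.1 (σ i) = psiFun n r.1 i := by
    intro i
    unfold psiFun
    congr 1
    rw [← Nat.card_coe_set_eq, ← Nat.card_coe_set_eq]
    exact (Nat.card_congr (Equiv.subtypeEquiv σ (fun j => hσ i j))).symm
  apply Subtype.ext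
  exact monotone_eq_of_perm _ _ (psi_mem r.1 r.2).1 (psi_mem r'.1 r'.2).1 σ hpoint

noncomputable def Phi : Quot (IsoRel n) → UIP n :=
  Quot.lift psi psi_compat

lemma Phi_injective : Function.Injective (Phi (n := n)) := by
  intro q q'
  induction q using Quot.ind with | _ r =>
  induction q' using Quot.ind with | _ r' =>
  intro h
  have h' : psi r = psi r' := h
  have hreq : r = r' := by
    apply Subtype.ext
    funext i j
    apply propext
    rw [psi_char r.1 r.2 i j, psi_char r'.1 r'.2 i j]
    have : psiFun n r.1 = psiFun n r'.1 := congrArg Subtype.val h'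
    rw [this]
  rw [hreq]


lemma Phi_surjective : Function.Surjective (Phi (n := n)) := by
  intro f
  obtain ⟨x, hx, hfx⟩ := exists_realization n f.1 f.2.1 f.2.2.1 f.2.2.2
  set r : Fin n → Fin n → Prop := fun i j => f.1 i ≤ (j : ℕ) with hrdef
  have hr : IsUnitIntervalRel n r := by
    refine ⟨x, hx, fun i j => ?_⟩
    constructor
    · exact (hfx i j).1
    · intro hlt
      by_contra hc
      simp only [hrdef, not_le] at hc
      exact absurd hlt (not_lt.2 (le_of_lt ((hfx i j).2 hc)))
  refine ⟨Quot.mk _ ⟨r, hr⟩, ?_⟩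
  show psi ⟨r, hr⟩ = f
  apply Subtype.ext
  funext i
  have h1 := psi_mem r hr
  apply thr_unique (h1.2.2 i) (f.2.2.2 i)
  intro j
  rw [← psi_char r hr i j]

lemma card_quot_eq_card_UIP : Nat.card (Quot (IsoRel n)) = Nat.card (UIP n) :=
  Nat.card_congr (Equiv.ofBijective _ ⟨Phi_injective, Phi_surjective⟩)

end

/-- **The number of unit interval posets with `n` elements, counted up to
isomorphism, is the `n`-th Catalan number** `Cat_n = (1/(2n+1)) * C(2n+1, n)`. -/
theorem card_unitIntervalPosets_eq_catalan (n : ℕ) :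
    Nat.card (Quot (IsoRel n)) = catalan n ∧
      (2 * n + 1) * catalan n = (2 * n + 1).choose n := by
  refine ⟨?_, catalan_arith n⟩
  rw [card_quot_eq_card_UIP]
  exact card_UIP_eq_catalan n
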